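/- Let k ≥ 1 be real and T₀ ≥ 3. Then ∏_{p ≤ T₀} (1 + k²/p) ≥ exp(−2k³ + ∑_{p ≤ T₀} k²/p); in particular if ∑_{p ≤ T₀} 1/p ≥ log log T then ∏_{p ≤ T₀}(1 + k²/p) ≥ e^{−2k³}(log T)^{k²}. -/

import Mathlib

open Finset Real

lemma aux_log_lb (x : ℝ) (hx : 0 ≤ x) : x - x^2 ≤ Real.log (1 + x) := by
  have h1 : (0:ℝ) < 1 + x := by linarith
  have h := Real.one_sub_inv_le_log_of_pos h1
  have he : 1 - (1+x)⁻¹ = x/(1+x) := by field_simp; ring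
  have h2 : x - x^2 ≤ 1 - (1+x)⁻¹ := by
    rw [he, le_div_iff₀ h1]; nlinarith
  linarith

lemma aux_harm (m : ℕ) (hm : 1 ≤ m) :
    ∑ n ∈ Finset.Icc 2 m, (1:ℝ)/n ≤ Real.log m := by
  induction m, hm using Nat.le_induction with
  | base => simp
  | succ m hm IH =>
    rw [Finset.sum_Icc_succ_top (by omega)]
    have hm1 : (0:ℝ) < m := by exact_mod_cast hm
    have h1 : (0:ℝ) < ((m:ℝ)+1)/m := by positivity
    have h := Real.one_sub_inv_le_log_of_pos h1
    rw [Real.log_div (by positivity) (ne_of_gt hm1)] at h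
    have h2 : 1 - (((m:ℝ)+1)/m)⁻¹ = (1:ℝ)/(m+1) := by
      rw [inv_div]; field_simp; ring
    push_cast
    linarith

lemma aux_sq' (a : ℕ) (ha : 2 ≤ a) : ∀ b : ℕ, a ≤ b →
    ∑ n ∈ Finset.Ico a b, (1:ℝ)/(n:ℝ)^2 ≤ 1/((a:ℝ)-1) - 1/((b:ℝ)-1) := by
  have ha1 : (1:ℝ) ≤ (a:ℝ) - 1 := by
    have : (2:ℝ) ≤ a := by exact_mod_cast ha
    linarith
  intro b hb
  induction b, hb using Nat.le_induction with
  | base => simp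
  | succ b hb IH =>
    rw [Finset.sum_Ico_succ_top hb]
    have hb1 : (1:ℝ) ≤ (b:ℝ) - 1 := by
      have : (2:ℝ) ≤ b := by exact_mod_cast (ha.trans hb)
      linarith
    have h2 : (1:ℝ)/(b:ℝ)^2 ≤ 1/((b:ℝ)-1) - 1/((b:ℝ)+1-1) := by
      rw [div_sub_div _ _ (by linarith) (by linarith), div_le_div_iff₀ (by nlinarith) (by nlinarith)]
      nlinarith
    push_cast
    linarith

lemma aux_sq (a : ℕ) (ha : 2 ≤ a) (b : ℕ) :
    ∑ n ∈ Finset.Ico a b, (1:ℝ)/(n:ℝ)^2 ≤ 1/((a:ℝ)-1) := by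
  have ha1 : (1:ℝ) ≤ (a:ℝ) - 1 := by
    have : (2:ℝ) ≤ a := by exact_mod_cast ha
    linarith
  rcases le_or_gt a b with h | h
  · have := aux_sq' a ha b h
    have hb1 : (1:ℝ) ≤ (b:ℝ) - 1 := by
      have : (2:ℝ) ≤ b := by exact_mod_cast (ha.trans h)
      linarith
    have : (0:ℝ) < 1/((b:ℝ)-1) := by positivity
    linarith [aux_sq' a ha b h]
  · rw [Finset.Ico_eq_empty (by omega), Finset.sum_empty]
    exact div_nonneg zero_le_one (by linarith)
theorem prod_one_add_ksq_div_p_lower (k T₀ : ℝ) (hk : 1 ≤ k) (hT₀ : 3 ≤ T₀) :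
    Real.exp (-(2 * k^3) + ∑ p ∈ (Finset.range (⌊T₀⌋₊ + 1)).filter Nat.Prime, k^2 / (p : ℝ))
      ≤ ∏ p ∈ (Finset.range (⌊T₀⌋₊ + 1)).filter Nat.Prime, (1 + k^2 / (p : ℝ)) ∧
    ∀ T : ℝ, 3 ≤ T →
      Real.log (Real.log T) ≤ ∑ p ∈ (Finset.range (⌊T₀⌋₊ + 1)).filter Nat.Prime, 1 / (p : ℝ) →
      Real.exp (-(2 * k^3)) * Real.log T ^ (k^2)
        ≤ ∏ p ∈ (Finset.range (⌊T₀⌋₊ + 1)).filter Nat.Prime, (1 + k^2 / (p : ℝ)) := by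
  classical
  set S := (Finset.range (⌊T₀⌋₊ + 1)).filter Nat.Prime with hS
  have hk2 : (1:ℝ) ≤ k^2 := by nlinarith
  have hppos : ∀ p ∈ S, (0:ℝ) < p := by
    intro p hp
    have : p.Prime := (Finset.mem_filter.mp hp).2
    exact_mod_cast this.pos
  have hfpos : ∀ p ∈ S, (0:ℝ) < 1 + k^2 / p := by
    intro p hp
    have := hppos p hp
    positivity
  set m := ⌊k^2⌋₊ with hm
  have hm1 : 1 ≤ m := Nat.le_floor (by exact_mod_cast hk2)
  have hm1' : (1:ℝ) ≤ m := by exact_mod_cast hm1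
  have hmk : (m:ℝ) ≤ k^2 := Nat.floor_le (by positivity)
  have hkm : k^2 ≤ 2*m := by
    have := Nat.lt_floor_add_one (k^2)
    push_cast at this ⊢
    linarith
  -- key bound
  have key : ∑ p ∈ S, (k^2 / p - Real.log (1 + k^2 / p)) ≤ 2 * k^3 := by
    rw [← Finset.sum_filter_add_sum_filter_not S (fun p : ℕ => (p:ℝ) ≤ k^2)]
    have hA : ∑ p ∈ S.filter (fun p : ℕ => (p:ℝ) ≤ k^2),
        (k^2 / p - Real.log (1 + k^2 / p)) ≤ 2 * k^2 * (k - 1) := by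
      have step1 : ∑ p ∈ S.filter (fun p : ℕ => (p:ℝ) ≤ k^2),
          (k^2 / p - Real.log (1 + k^2 / p))
          ≤ ∑ p ∈ S.filter (fun p : ℕ => (p:ℝ) ≤ k^2), k^2 * (1 / p) := by
        apply Finset.sum_le_sum
        intro p hp
        have hp' := hppos p (Finset.mem_filter.mp hp).1
        have hlog : (0:ℝ) ≤ Real.log (1 + k^2 / p) :=
          Real.log_nonneg (by nlinarith [div_nonneg (le_of_lt (by positivity : (0:ℝ) < k^2)) hp'.le])
        rw [mul_one_div]
        linarith
      have step2 : ∑ p ∈ S.filter (fun p : ℕ => (p:ℝ) ≤ k^2), k^2 * (1 / p)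
          ≤ ∑ n ∈ Finset.Icc 2 m, k^2 * ((1:ℝ) / n) := by
        apply Finset.sum_le_sum_of_subset_of_nonneg
        · intro p hp
          obtain ⟨hp1, hp2⟩ := Finset.mem_filter.mp hp
          have hprime := (Finset.mem_filter.mp hp1).2
          exact Finset.mem_Icc.mpr ⟨hprime.two_le, Nat.le_floor hp2⟩
        · intro n _ _
          positivity
      have step3 : ∑ n ∈ Finset.Icc 2 m, k^2 * ((1:ℝ) / n) ≤ k^2 * Real.log m := by
        rw [← Finset.mul_sum]
        exact mul_le_mul_of_nonneg_left (aux_harm m hm1) (by positivity)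
      have step4 : Real.log (m:ℝ) ≤ 2 * (k - 1) := by
        have h1 : Real.log (m:ℝ) ≤ Real.log (k^2) :=
          Real.log_le_log (by linarith) hmk
        have h2 : Real.log (k^2) = 2 * Real.log k := by
          rw [Real.log_pow]; push_cast; ring
        have h3 : Real.log k ≤ k - 1 := Real.log_le_sub_one_of_pos (by linarith)
        linarith
      nlinarith [sq_nonneg k]
    have hB : ∑ p ∈ S.filter (fun p : ℕ => ¬ (p:ℝ) ≤ k^2),
        (k^2 / p - Real.log (1 + k^2 / p)) ≤ 2 * k^2 := by
      have step1 : ∑ p ∈ S.filter (fun p : ℕ => ¬ (p:ℝ) ≤ k^2),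
          (k^2 / p - Real.log (1 + k^2 / p))
          ≤ ∑ p ∈ S.filter (fun p : ℕ => ¬ (p:ℝ) ≤ k^2), k^4 * ((1:ℝ) / (p:ℝ)^2) := by
        apply Finset.sum_le_sum
        intro p hp
        have hp' := hppos p (Finset.mem_filter.mp hp).1
        have hx : (0:ℝ) ≤ k^2 / p := by positivity
        have := aux_log_lb (k^2 / p) hx
        have heq : (k^2 / p)^2 = k^4 * ((1:ℝ)/(p:ℝ)^2) := by
          field_simp
        linarith [heq ▸ this]
      have step2 : ∑ p ∈ S.filter (fun p : ℕ => ¬ (p:ℝ) ≤ k^2), k^4 * ((1:ℝ) / (p:ℝ)^2)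
          ≤ ∑ n ∈ Finset.Ico (m+1) (⌊T₀⌋₊ + 1), k^4 * ((1:ℝ) / (n:ℝ)^2) := by
        apply Finset.sum_le_sum_of_subset_of_nonneg
        · intro p hp
          obtain ⟨hp1, hp2⟩ := Finset.mem_filter.mp hp
          have hlt : m < p := Nat.floor_lt (by positivity) |>.mpr (lt_of_not_ge hp2)
          have hub : p < ⌊T₀⌋₊ + 1 := Finset.mem_range.mp (Finset.mem_filter.mp hp1).1
          exact Finset.mem_Ico.mpr ⟨hlt, hub⟩
        · intro n _ _
          positivity
      have step3 : ∑ n ∈ Finset.Ico (m+1) (⌊T₀⌋₊ + 1), k^4 * ((1:ℝ) / (n:ℝ)^2)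
          ≤ k^4 * (1 / ((m:ℝ)+1-1)) := by
        rw [← Finset.mul_sum]
        have := aux_sq (m+1) (by omega) (⌊T₀⌋₊ + 1)
        push_cast at this
        exact mul_le_mul_of_nonneg_left this (by positivity)
      have step4 : k^4 * (1 / ((m:ℝ)+1-1)) ≤ 2 * k^2 := by
        rw [mul_one_div]
        rw [div_le_iff₀ (by linarith)]
        nlinarith
      linarith
    nlinarith [hA, hB]
  -- first conjunct
  have main : Real.exp (-(2 * k^3) + ∑ p ∈ S, k^2 / (p:ℝ)) ≤ ∏ p ∈ S, (1 + k^2 / (p:ℝ)) := by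
    have h1 : -(2 * k^3) + ∑ p ∈ S, k^2 / (p:ℝ) ≤ ∑ p ∈ S, Real.log (1 + k^2 / p) := by
      rw [Finset.sum_sub_distrib] at key
      linarith
    calc Real.exp (-(2 * k^3) + ∑ p ∈ S, k^2 / (p:ℝ))
        ≤ Real.exp (∑ p ∈ S, Real.log (1 + k^2 / p)) := Real.exp_le_exp.mpr h1
      _ = ∏ p ∈ S, Real.exp (Real.log (1 + k^2 / p)) := Real.exp_sum S _
      _ = ∏ p ∈ S, (1 + k^2 / (p:ℝ)) := by
          apply Finset.prod_congr rfl
          intro p hp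
          exact Real.exp_log (hfpos p hp)
  refine ⟨main, ?_⟩
  intro T hT hsum
  have hlogT : (0:ℝ) < Real.log T := Real.log_pos (by linarith)
  have hrw : Real.log T ^ (k^2) = Real.exp (Real.log (Real.log T) * k^2) :=
    Real.rpow_def_of_pos hlogT _
  rw [hrw, ← Real.exp_add]
  apply le_trans _ main
  apply Real.exp_le_exp.mpr
  have hsum' : ∑ p ∈ S, k^2 / (p:ℝ) = k^2 * ∑ p ∈ S, 1 / (p:ℝ) := by
    rw [Finset.mul_sum]
    apply Finset.sum_congr rfl
    intro p _
    rw [mul_one_div]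
  rw [hsum']
  have : Real.log (Real.log T) * k^2 ≤ k^2 * ∑ p ∈ S, 1 / (p:ℝ) := by
    rw [mul_comm]
    exact mul_le_mul_of_nonneg_left hsum (by positivity)
  linarith
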